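/- Let B ∈ ℝ^{n×n} be symmetric positive definite, x ∈ ℝⁿ, and suppose d := d_B(x) ≠ 0. Then D(x, d) ≤ −cos β · ‖d‖ · ‖d_SD(x)‖, where cos β := (dᵀBd)/(‖d‖ ‖Bd‖). -/

import Mathlib

set_option maxHeartbeats 1000000

open RealInnerProductSpace

noncomputable section

abbrev E (n : ℕ) := EuclideanSpace ℝ (Fin n)

def maxD {n m : ℕ} [NeZero m] (f : Fin m → E n → ℝ) (x d : E n) : ℝ :=
  Finset.univ.sup' Finset.univ_nonempty (fun i => ⟪gradient (f i) x, d⟫)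

def quad {n : ℕ} (B : Matrix (Fin n) (Fin n) ℝ) (d : E n) : ℝ :=
  ∑ i, ∑ j, d i * B i j * d j

def mulVecE {n : ℕ} (B : Matrix (Fin n) (Fin n) ℝ) (v : E n) : E n :=
  Matrix.toEuclideanLin B v

section aux
variable {n m : ℕ} [NeZero m] (f : Fin m → E n → ℝ) (x : E n)

lemma maxD_zero : maxD f x 0 = 0 := by
  simp [maxD]

lemma maxD_smul (t : ℝ) (ht : 0 ≤ t) (d : E n) : maxD f x (t • d) = t * maxD f x d := by
  unfold maxD
  rw [Finset.comp_sup'_eq_sup'_comp Finset.univ_nonempty (fun r => t * r)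
    (fun a b => mul_max_of_nonneg a b ht)]
  simp [Function.comp, inner_smul_right]

lemma maxD_convex (t : ℝ) (h0 : 0 ≤ t) (h1 : t ≤ 1) (a b : E n) :
    maxD f x ((1 - t) • a + t • b) ≤ (1 - t) * maxD f x a + t * maxD f x b := by
  apply Finset.sup'_le
  intro i _
  rw [inner_add_right, inner_smul_right, inner_smul_right]
  have ha : ⟪gradient (f i) x, a⟫ ≤ maxD f x a :=
    Finset.le_sup' (fun j => (⟪gradient (f j) x, a⟫ : ℝ)) (Finset.mem_univ i)
  have hb : ⟪gradient (f i) x, b⟫ ≤ maxD f x b :=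
    Finset.le_sup' (fun j => (⟪gradient (f j) x, b⟫ : ℝ)) (Finset.mem_univ i)
  have := mul_le_mul_of_nonneg_left ha (by linarith : (0:ℝ) ≤ 1 - t)
  have := mul_le_mul_of_nonneg_left hb h0
  linarith

end aux

section quadaux
variable {n : ℕ} (B : Matrix (Fin n) (Fin n) ℝ)

/-- bilinear form -/
def bil (u v : E n) : ℝ := ∑ i, ∑ j, u i * B i j * v j

lemma quad_smul (t : ℝ) (d : E n) : quad B (t • d) = t ^ 2 * quad B d := by
  simp only [quad, PiLp.smul_apply, smul_eq_mul, Finset.mul_sum]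
  refine Finset.sum_congr rfl fun i _ => Finset.sum_congr rfl fun j _ => by ring

lemma quad_expand (u v : E n) (t : ℝ) :
    quad B (u + t • v) = quad B u + t * bil B u v + t * bil B v u + t ^ 2 * quad B v := by
  simp only [quad, bil, PiLp.add_apply, PiLp.smul_apply, smul_eq_mul, Finset.mul_sum,
    ← Finset.sum_add_distrib]
  refine Finset.sum_congr rfl fun i _ => ?_
  refine Finset.sum_congr rfl fun j _ => by ring

lemma bil_symm (hB : B.IsHermitian) (u v : E n) : bil B u v = bil B v u := by
  rw [bil, Finset.sum_comm]
  refine Finset.sum_congr rfl fun i _ => Finset.sum_congr rfl fun j _ => ?_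
  have hBij : B j i = B i j := by
    conv_lhs => rw [← hB.eq]
    simp [Matrix.conjTranspose_apply]
  rw [hBij]; ring

lemma bil_sub_right (u v w : E n) : bil B u (v - w) = bil B u v - bil B u w := by
  simp only [bil, PiLp.sub_apply, mul_sub, Finset.sum_sub_distrib]

lemma bil_self (d : E n) : bil B d d = quad B d := rfl

lemma inner_mulVecE (u v : E n) : ⟪mulVecE B u, v⟫ = bil B v u := by
  simp only [mulVecE, Matrix.toEuclideanLin_apply, bil]
  rw [PiLp.inner_apply]
  simp only [RCLike.inner_apply, conj_trivial]
  simp only [Matrix.mulVec, dotProduct, Finset.mul_sum]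
  refine Finset.sum_congr rfl fun i _ => Finset.sum_congr rfl fun j _ => by
    ring

lemma quad_posdef {B : Matrix (Fin n) (Fin n) ℝ} (hB : B.PosDef) {d : E n} (hd : d ≠ 0) :
    0 < quad B d := by
  have h := hB.dotProduct_mulVec_pos (x := fun i => d i) (by
    intro h
    apply hd
    ext i
    exact congrFun h i)
  have he : dotProduct (star fun i => d i) (B.mulVec fun i => d i) = quad B d := by
    simp only [quad, dotProduct, Matrix.mulVec, Pi.star_apply, star_trivial,
      Finset.mul_sum]
    refine Finset.sum_congr rfl fun i _ => Finset.sum_congr rfl fun j _ => by ring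
  rwa [he] at h

lemma quad_nonneg {B : Matrix (Fin n) (Fin n) ℝ} (hB : B.PosDef) (d : E n) :
    0 ≤ quad B d := by
  by_cases hd : d = 0
  · simp [hd, quad]
  · exact (quad_posdef hB hd).le

end quadaux

/-- D(x, d_B(x)) ≤ −cos β · ‖d_B(x)‖ · ‖d_SD(x)‖. -/
theorem stmt13 {n m : ℕ} [NeZero m] (f : Fin m → E n → ℝ)
    (hf : ∀ i, ContDiff ℝ 1 (f i))
    (B : Matrix (Fin n) (Fin n) ℝ) (hB : B.PosDef)
    (x dB dsd : E n) (hdB0 : dB ≠ 0)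
    (hdB : ∀ d : E n, maxD f x dB + quad B dB / 2 ≤ maxD f x d + quad B d / 2)
    (hdsd : ∀ d : E n, maxD f x dsd + ‖dsd‖ ^ 2 / 2 ≤ maxD f x d + ‖d‖ ^ 2 / 2) :
    maxD f x dB ≤ -(quad B dB / (‖dB‖ * ‖mulVecE B dB‖) * ‖dB‖ * ‖dsd‖) := by
  classical
  set q : ℝ := quad B dB with hqdef
  have hq : 0 < q := quad_posdef hB hdB0
  -- D dB ≤ 0
  have h0 : maxD f x dB + q / 2 ≤ 0 := by
    have := hdB 0
    simpa [maxD_zero, quad] using this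
  have hDle : maxD f x dB ≤ 0 := by linarith
  -- Step 1 : maxD f x dB = -q
  have hDq : maxD f x dB = -q := by
    set D := maxD f x dB with hD
    have ht : 0 ≤ -D / q := div_nonneg (by linarith) hq.le
    set t : ℝ := -D / q with htdef
    have htq : q * t = -D := by
      rw [htdef, mul_comm, div_mul_cancel₀ _ hq.ne']
    have key := hdB (t • dB)
    rw [maxD_smul f x _ ht, quad_smul, ← hD, ← hqdef] at key
    have k2 : q * (D + q / 2) ≤ q * (t * D + t ^ 2 * q / 2) :=
      mul_le_mul_of_nonneg_left key hq.le
    have h2 : (D + q) ^ 2 ≤ 0 := by nlinarith [k2, htq]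
    nlinarith [sq_nonneg (D + q)]
  -- g := mulVecE B dB; ⟪g, dB⟫ = q
  set g : E n := mulVecE B dB with hg
  have hgdB : ⟪g, dB⟫ = q := by
    rw [hg, inner_mulVecE, bil_self]
  have hg0 : g ≠ 0 := by
    intro h
    rw [h, inner_zero_left] at hgdB
    exact hq.ne hgdB
  have hgnorm : 0 < ‖g‖ := norm_pos_iff.mpr hg0
  have hdBnorm : 0 < ‖dB‖ := norm_pos_iff.mpr hdB0
  by_cases hdsd0 : dsd = 0
  · rw [hdsd0, hDq]
    simp only [norm_zero, mul_zero, neg_zero]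
    linarith
  -- Step 2 : subgradient inequality : maxD f x dsd ≥ -⟪g, dsd⟫
  have hsub : -⟪g, dsd⟫ ≤ maxD f x dsd := by
    set A : ℝ := maxD f x dsd - maxD f x dB + (bil B dB dsd - q) with hA
    set v : E n := dsd - dB with hv
    have hqv : 0 ≤ quad B v := quad_nonneg hB v
    have hkey : ∀ t : ℝ, 0 < t → t ≤ 1 → 0 ≤ A + t * quad B v / 2 := by
      intro t ht0 ht1
      have hpt : dB + t • v = (1 - t) • dB + t • dsd := by
        rw [hv]; module
      have h1 := hdB (dB + t • v)
      have h2 : maxD f x (dB + t • v) ≤ (1 - t) * maxD f x dB + t * maxD f x dsd := by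
        rw [hpt]; exact maxD_convex f x t ht0.le ht1 dB dsd
      rw [quad_expand] at h1
      have hbs : bil B v dB = bil B dB v := bil_symm B hB.1 v dB
      have hbv : bil B dB v = bil B dB dsd - q := by
        rw [hv, bil_sub_right, bil_self, hqdef]
      have h3 : 0 ≤ t * A + t ^ 2 * quad B v / 2 := by
        rw [hA]
        nlinarith [h1, h2, hbs, hbv]
      nlinarith [h3, ht0]
    by_contra hcon
    push_neg at hcon
    have hA' : A = maxD f x dsd + ⟪g, dsd⟫ := by
      rw [hA, hDq, hg, inner_mulVecE, bil_symm B hB.1 dsd dB]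
      ring
    have hAneg : A < 0 := by rw [hA']; linarith
    rcases eq_or_lt_of_le hqv with hqv0 | hqvpos
    · have := hkey 1 one_pos le_rfl
      rw [← hqv0] at this
      linarith
    · set t : ℝ := min 1 (-A / quad B v) with htd
      have ht0 : 0 < t := lt_min one_pos (div_pos (by linarith) hqvpos)
      have ht1 : t ≤ 1 := min_le_left _ _
      have htq : t * quad B v ≤ -A := by
        have : t ≤ -A / quad B v := min_le_right _ _
        calc t * quad B v ≤ (-A / quad B v) * quad B v :=
              mul_le_mul_of_nonneg_right this hqvpos.le
          _ = -A := by field_simp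
      have := hkey t ht0 ht1
      linarith
  -- Step 3 : maxD f x dsd = -‖dsd‖^2
  have hsd : maxD f x dsd = -‖dsd‖ ^ 2 := by
    have hs : (0:ℝ) < ‖dsd‖ ^ 2 := pow_pos (norm_pos_iff.mpr hdsd0) 2
    set D := maxD f x dsd with hD
    have h0' : D + ‖dsd‖ ^ 2 / 2 ≤ 0 := by
      have := hdsd 0
      simpa [maxD_zero] using this
    have ht : 0 ≤ -D / ‖dsd‖ ^ 2 := div_nonneg (by linarith) hs.le
    set s2 : ℝ := ‖dsd‖ ^ 2 with hs2
    set t : ℝ := -D / s2 with htdef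
    have htq : s2 * t = -D := by
      rw [htdef, mul_comm, div_mul_cancel₀ _ hs.ne']
    have key := hdsd (t • dsd)
    rw [maxD_smul f x _ ht, norm_smul, Real.norm_eq_abs, abs_of_nonneg ht, mul_pow,
      ← hD] at key
    have k2 : s2 * (D + s2 / 2) ≤ s2 * (t * D + t ^ 2 * s2 / 2) := by
      apply mul_le_mul_of_nonneg_left _ hs.le
      calc D + s2 / 2 ≤ t * D + t ^ 2 * ‖dsd‖ ^ 2 / 2 := key
        _ = t * D + t ^ 2 * s2 / 2 := by rw [hs2]
    have h2 : (D + s2) ^ 2 ≤ 0 := by nlinarith [k2, htq]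
    nlinarith [sq_nonneg (D + s2)]
  -- Step 4: ‖dsd‖ ≤ ‖g‖
  have hds : 0 < ‖dsd‖ := norm_pos_iff.mpr hdsd0
  have hcs : ⟪g, dsd⟫ ≤ ‖g‖ * ‖dsd‖ := real_inner_le_norm g dsd
  have hle : ‖dsd‖ ≤ ‖g‖ := by
    have : ‖dsd‖ ^ 2 ≤ ‖g‖ * ‖dsd‖ := by
      rw [hsd] at hsub
      linarith
    nlinarith
  -- finish
  have hrhs : q / (‖dB‖ * ‖g‖) * ‖dB‖ * ‖dsd‖ = q * ‖dsd‖ / ‖g‖ := by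
    field_simp
  rw [hDq, hrhs, neg_le_neg_iff, div_le_iff₀ hgnorm]
  nlinarith
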